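/- For every partition P of Fin n (n ≥ 1), among the complements of P the Hamming distance HD(P,·) and the variation of information VI(P,·) have the same minimizers and the same maximizers: a complement Q of P minimizes HD(P,Q) over all complements of P if and only if it minimizes VI(P,Q) over all complements of P, and likewise a complement Q maximizes HD(P,Q) over complements of P if and only if it maximizes VI(P,Q) over complements of P. -/

import Mathlib

open scoped BigOperators

/-- The size `s(P)` of a partition `P` of `Fin n`: the number of unordered pairs
`{i,j}` of distinct elements of `Fin n` that are `P`-equivalent (counted as
ordered pairs `(i,j)` with `i < j`). -/
noncomputable def partSize (n : ℕ) (P : Setoid (Fin n)) : ℕ :=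
  Set.ncard {p : Fin n × Fin n | p.1 < p.2 ∧ P p.1 p.2}

/-- Hamming distance between partitions: `HD(P,Q) = s(P) + s(Q) - 2 s(P ⊓ Q)`. -/
noncomputable def HD (n : ℕ) (P Q : Setoid (Fin n)) : ℤ :=
  (partSize n P : ℤ) + (partSize n Q : ℤ) - 2 * (partSize n (P ⊓ Q) : ℤ)

/-- Entropy of a partition (binary logarithm):
`e(P) = -∑_{A block of P} (|A|/n) · log₂(|A|/n)`. -/
noncomputable def entropy (n : ℕ) (P : Setoid (Fin n)) : ℝ :=
  - ∑ᶠ A ∈ P.classes, ((A.ncard : ℝ) / n) * Real.logb 2 ((A.ncard : ℝ) / n)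

/-- Variation of information: `VI(P,Q) = 2 e(P ⊓ Q) - e(P) - e(Q)`. -/
noncomputable def VI (n : ℕ) (P Q : Setoid (Fin n)) : ℝ :=
  2 * entropy n (P ⊓ Q) - entropy n P - entropy n Q

namespace HDVIProof

open Finset Classical

variable {n : ℕ}

/-- The classes of a setoid on `Fin n`, as a `Finset`. -/
noncomputable def cls (S : Setoid (Fin n)) : Finset (Set (Fin n)) :=
  (Set.toFinite S.classes).toFinset

lemma mem_cls {S : Setoid (Fin n)} {A : Set (Fin n)} : A ∈ cls S ↔ A ∈ S.classes :=
  Set.Finite.mem_toFinset _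

/-- A set of `Fin n` as a `Finset`. -/
noncomputable def fset (A : Set (Fin n)) : Finset (Fin n) :=
  (Set.toFinite A).toFinset

lemma mem_fset {A : Set (Fin n)} {x : Fin n} : x ∈ fset A ↔ x ∈ A :=
  Set.Finite.mem_toFinset _

lemma ncard_eq_fset (A : Set (Fin n)) : A.ncard = (fset A).card :=
  Set.ncard_eq_toFinset_card A (Set.toFinite A)

lemma class_eq_of_mem {S : Setoid (Fin n)} {A : Set (Fin n)} (hA : A ∈ cls S)
    {x : Fin n} (hx : x ∈ A) : A = {y | S y x} := by
  rcases mem_cls.1 hA with ⟨z, rfl⟩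
  ext y
  simp only [Set.mem_setOf_eq] at hx ⊢
  exact ⟨fun h => S.trans' h (S.symm' hx), fun h => S.trans' h hx⟩

lemma rel_of_mem_class {S : Setoid (Fin n)} {A : Set (Fin n)} (hA : A ∈ cls S)
    {x y : Fin n} (hx : x ∈ A) (hy : y ∈ A) : S x y := by
  rw [class_eq_of_mem hA hx] at hy
  exact S.symm' hy

lemma mem_class_self (S : Setoid (Fin n)) (x : Fin n) :
    x ∈ ({y | S y x} : Set (Fin n)) := S.refl' x

lemma class_mem_cls (S : Setoid (Fin n)) (x : Fin n) :
    ({y | S y x} : Set (Fin n)) ∈ cls S :=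
  mem_cls.2 (S.mem_classes x)

lemma cls_nonempty {S : Setoid (Fin n)} {A : Set (Fin n)} (hA : A ∈ cls S) :
    ∃ x, x ∈ A := by
  rcases mem_cls.1 hA with ⟨z, rfl⟩
  exact ⟨z, S.refl' z⟩

lemma cls_disjoint {S : Setoid (Fin n)} {A B : Set (Fin n)} (hA : A ∈ cls S)
    (hB : B ∈ cls S) (hAB : A ≠ B) {x : Fin n} (hx : x ∈ A) : x ∉ B := fun hxB =>
  hAB (Setoid.eq_of_mem_classes (mem_cls.1 hA) hx (mem_cls.1 hB) hxB)

/-- every x belongs to a unique class -/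
lemma exists_unique_class (S : Setoid (Fin n)) (x : Fin n) :
    ∃ A ∈ cls S, x ∈ A := ⟨_, class_mem_cls S x, mem_class_self S x⟩

/-- The union of all the classes, as Finsets, is everything; sizes sum to `n`. -/
lemma sum_ncard_cls (S : Setoid (Fin n)) : ∑ A ∈ cls S, A.ncard = n := by
  classical
  have hdisj : ∀ A ∈ cls S, ∀ B ∈ cls S, A ≠ B →
      Disjoint (fset A) (fset B) := by
    intro A hA B hB hAB
    refine Finset.disjoint_left.2 fun x hx hx' => ?_
    exact cls_disjoint hA hB hAB (mem_fset.1 hx) (mem_fset.1 hx')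
  have hcov : (cls S).biUnion fset = Finset.univ := by
    apply Finset.eq_univ_of_forall
    intro x
    rcases exists_unique_class S x with ⟨A, hA, hxA⟩
    exact Finset.mem_biUnion.2 ⟨A, hA, mem_fset.2 hxA⟩
  calc ∑ A ∈ cls S, A.ncard = ∑ A ∈ cls S, (fset A).card := by
        exact Finset.sum_congr rfl fun A _ => ncard_eq_fset A
    _ = ((cls S).biUnion fset).card := (Finset.card_biUnion hdisj).symm
    _ = n := by rw [hcov]; simp

lemma ncard_pos {S : Setoid (Fin n)} {A : Set (Fin n)} (hA : A ∈ cls S) :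
    1 ≤ A.ncard := by
  rcases cls_nonempty hA with ⟨x, hx⟩
  rw [ncard_eq_fset]
  exact Finset.card_pos.2 ⟨x, mem_fset.2 hx⟩

lemma ncard_le_n {A : Set (Fin n)} : A.ncard ≤ n := by
  rw [ncard_eq_fset]
  simpa using Finset.card_le_card (Finset.subset_univ (fset A))

/-! ### Counting pairs inside a Finset -/

lemma card_ordered_pairs (s : Finset (Fin n)) :
    ((Finset.univ : Finset (Fin n × Fin n)).filter
      (fun p => p.1 ∈ s ∧ p.2 ∈ s ∧ p.1 < p.2)).card = s.card.choose 2 := by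
  classical
  rw [← Finset.card_powersetCard 2 s]
  apply Finset.card_bij (fun p _ => ({p.1, p.2} : Finset (Fin n)))
  · intro p hp
    simp only [Finset.mem_filter] at hp
    obtain ⟨-, h1, h2, hlt⟩ := hp
    rw [Finset.mem_powersetCard]
    constructor
    · intro x hx
      rcases Finset.mem_insert.1 hx with rfl | hx
      · exact h1
      · rw [Finset.mem_singleton.1 hx]; exact h2
    · rw [Finset.card_insert_of_notMem (by simp [hlt.ne]), Finset.card_singleton]
  · intro p hp q hq hpq
    simp only [Finset.mem_filter] at hp hq
    obtain ⟨-, -, -, hp3⟩ := hp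
    obtain ⟨-, -, -, hq3⟩ := hq
    have h1 : p.1 ∈ ({q.1, q.2} : Finset (Fin n)) := by rw [← hpq]; simp
    have h2 : p.2 ∈ ({q.1, q.2} : Finset (Fin n)) := by rw [← hpq]; simp
    have g1 : q.1 ∈ ({p.1, p.2} : Finset (Fin n)) := by rw [hpq]; simp
    simp only [Finset.mem_insert, Finset.mem_singleton] at h1 h2 g1
    have : p.1 = q.1 ∧ p.2 = q.2 := by
      rcases h1 with e1 | e1
      · rcases h2 with e2 | e2
        · exact absurd (e1 ▸ e2 ▸ hp3) (lt_irrefl _)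
        · exact ⟨e1, e2⟩
      · rcases h2 with e2 | e2
        · exact absurd (hp3.trans (e2 ▸ hq3)) (by rw [e1]; exact lt_irrefl _)
        · exact absurd (e1.trans e2.symm) (ne_of_lt hp3)
    exact Prod.ext this.1 this.2
  · intro t ht
    rw [Finset.mem_powersetCard] at ht
    obtain ⟨hsub, hcard⟩ := ht
    obtain ⟨x, y, hxy, rfl⟩ := Finset.card_eq_two.1 hcard
    rcases lt_or_gt_of_ne hxy with h | h
    · refine ⟨(x, y), ?_, rfl⟩
      simp only [Finset.mem_filter, Finset.mem_univ, true_and]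
      exact ⟨hsub (by simp), hsub (by simp), h⟩
    · refine ⟨(y, x), ?_, ?_⟩
      · simp only [Finset.mem_filter, Finset.mem_univ, true_and]
        exact ⟨hsub (by simp), hsub (by simp), h⟩
      · exact Finset.pair_comm y x

/-- `partSize` as a sum over classes. -/
lemma partSize_eq_sum (S : Setoid (Fin n)) :
    partSize n S = ∑ A ∈ cls S, (A.ncard).choose 2 := by
  classical
  have hset : {p : Fin n × Fin n | p.1 < p.2 ∧ S p.1 p.2} =
      ↑((Finset.univ : Finset (Fin n × Fin n)).filter
        (fun p => p.1 < p.2 ∧ S p.1 p.2)) := by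
    ext p; simp
  rw [partSize, hset, Set.ncard_coe_finset]
  have hsplit : (Finset.univ : Finset (Fin n × Fin n)).filter
      (fun p => p.1 < p.2 ∧ S p.1 p.2) =
      (cls S).biUnion (fun A => (Finset.univ : Finset (Fin n × Fin n)).filter
        (fun p => p.1 ∈ A ∧ p.2 ∈ A ∧ p.1 < p.2)) := by
    ext p
    simp only [Finset.mem_filter, Finset.mem_univ, true_and, Finset.mem_biUnion]
    constructor
    · rintro ⟨hlt, hrel⟩
      refine ⟨{y | S y p.2}, class_mem_cls S p.2, hrel, mem_class_self S p.2, hlt⟩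
    · rintro ⟨A, hA, h1, h2, hlt⟩
      exact ⟨hlt, rel_of_mem_class hA h1 h2⟩
  rw [hsplit, Finset.card_biUnion]
  · apply Finset.sum_congr rfl
    intro A hA
    have : (Finset.univ : Finset (Fin n × Fin n)).filter
        (fun p => p.1 ∈ A ∧ p.2 ∈ A ∧ p.1 < p.2) =
        (Finset.univ : Finset (Fin n × Fin n)).filter
        (fun p => p.1 ∈ fset A ∧ p.2 ∈ fset A ∧ p.1 < p.2) := by
      apply Finset.filter_congr; intro p _; simp [mem_fset]
    rw [this, card_ordered_pairs, ncard_eq_fset]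
  · intro A hA B hB hAB
    refine Finset.disjoint_left.2 fun p hp hp' => ?_
    simp only [Finset.mem_filter] at hp hp'
    exact cls_disjoint hA hB hAB hp.2.1 hp'.2.1

/-! ### Profiles -/

/-- number of classes of size at least `j` -/
noncomputable def xcount (S : Setoid (Fin n)) (j : ℕ) : ℕ :=
  ((cls S).filter fun A => j ≤ A.ncard).card

/-- the profile `∑_B min(|B|, m)` -/
noncomputable def prof (S : Setoid (Fin n)) (m : ℕ) : ℕ :=
  ∑ A ∈ cls S, min A.ncard m

lemma prof_eq_sum_xcount (S : Setoid (Fin n)) (m : ℕ) :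
    prof S m = ∑ j ∈ Finset.range m, xcount S (j + 1) := by
  classical
  have hmin : ∀ c : ℕ, min c m = ∑ j ∈ Finset.range m, if j + 1 ≤ c then 1 else 0 := by
    intro c
    rw [← Finset.sum_filter]
    have : (Finset.range m).filter (fun j => j + 1 ≤ c) = Finset.range (min c m) := by
      ext j
      simp only [Finset.mem_filter, Finset.mem_range, Nat.add_one_le_iff, lt_min_iff]
      tauto
    rw [this]
    simp [min_comm]
  rw [prof]
  rw [Finset.sum_congr rfl (fun A _ => hmin A.ncard), Finset.sum_comm]
  apply Finset.sum_congr rfl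
  intro j _
  rw [xcount, Finset.card_filter]

lemma xcount_eq_zero (S : Setoid (Fin n)) {j : ℕ} (hj : n < j) : xcount S j = 0 := by
  rw [xcount, Finset.card_eq_zero]
  rw [Finset.filter_eq_empty_iff]
  intro A _
  exact fun h => absurd (le_trans h ncard_le_n) (not_le.2 hj)

lemma prof_n_eq (S : Setoid (Fin n)) {m : ℕ} (hm : n ≤ m) : prof S m = n := by
  rw [prof]
  have : ∀ A ∈ cls S, min A.ncard m = A.ncard := fun A _ =>
    min_eq_left (le_trans ncard_le_n hm)
  rw [Finset.sum_congr rfl this, sum_ncard_cls]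

/-- generic representation of a sum over classes via `xcount` -/
lemma sum_cls_rep (S : Setoid (Fin n)) (g : ℕ → ℝ) (h0 : g 0 = 0) :
    ∑ A ∈ cls S, g A.ncard =
      ∑ j ∈ Finset.range n, (g (j + 1) - g j) * (xcount S (j + 1) : ℝ) := by
  classical
  have htel : ∀ c : ℕ, c ≤ n → g c = ∑ j ∈ Finset.range n,
      (if j + 1 ≤ c then g (j + 1) - g j else 0) := by
    intro c hc
    rw [← Finset.sum_filter]
    have : (Finset.range n).filter (fun j => j + 1 ≤ c) = Finset.range c := by
      ext j
      simp only [Finset.mem_filter, Finset.mem_range, Nat.add_one_le_iff]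
      exact ⟨fun h => h.2, fun h => ⟨lt_of_lt_of_le h hc, h⟩⟩
    rw [this, Finset.sum_range_sub (fun i => g i), h0, sub_zero]
  rw [Finset.sum_congr rfl (fun A _ => htel A.ncard ncard_le_n), Finset.sum_comm]
  apply Finset.sum_congr rfl
  intro j _
  rw [← Finset.sum_filter, Finset.sum_const]
  rw [xcount]
  simp [mul_comm]

/-! ### Abel summation and the comparison lemma -/

lemma abel_identity (f Z : ℕ → ℝ) (N : ℕ) :
    ∑ j ∈ Finset.range N, f j * (Z (j + 1) - Z j)
      = f N * Z N - f 0 * Z 0 - ∑ j ∈ Finset.range N, (f (j + 1) - f j) * Z (j + 1) := by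
  induction N with
  | zero => simp
  | succ N ih => rw [Finset.sum_range_succ, Finset.sum_range_succ, ih]; ring

lemma xcount_cast_eq (S : Setoid (Fin n)) (j : ℕ) :
    (xcount S (j + 1) : ℝ) = (prof S (j + 1) : ℝ) - (prof S j : ℝ) := by
  rw [prof_eq_sum_xcount, prof_eq_sum_xcount, Finset.sum_range_succ]
  push_cast; ring

lemma core_compare (S S' : Setoid (Fin n)) (g : ℕ → ℝ) (h0 : g 0 = 0)
    (hconv : ∀ j : ℕ, j + 2 ≤ n → g (j + 1) - g j < g (j + 2) - g (j + 1))
    (hX : ∀ m, prof S m ≤ prof S' m) :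
    (∑ A ∈ cls S', g A.ncard) ≤ (∑ A ∈ cls S, g A.ncard) ∧
      ((∑ A ∈ cls S', g A.ncard) = (∑ A ∈ cls S, g A.ncard) ↔
        ∀ m, prof S m = prof S' m) := by
  classical
  set Z : ℕ → ℝ := fun m => (prof S' m : ℝ) - (prof S m : ℝ) with hZdef
  have hZ0 : Z 0 = 0 := by simp [hZdef, prof]
  have hZn : Z n = 0 := by simp [hZdef, prof_n_eq S le_rfl, prof_n_eq S' le_rfl]
  have hZnonneg : ∀ m, 0 ≤ Z m := fun m => by
    simp only [hZdef, sub_nonneg, Nat.cast_le]; exact hX m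
  have key : (∑ A ∈ cls S, g A.ncard) - (∑ A ∈ cls S', g A.ncard) =
      ∑ j ∈ Finset.range n, ((g (j + 2) - g (j + 1)) - (g (j + 1) - g j)) * Z (j + 1) := by
    rw [sum_cls_rep S g h0, sum_cls_rep S' g h0, ← Finset.sum_sub_distrib]
    have e1 : ∀ j ∈ Finset.range n, (g (j + 1) - g j) * (xcount S (j + 1) : ℝ) -
        (g (j + 1) - g j) * (xcount S' (j + 1) : ℝ)
        = -((fun j => g (j + 1) - g j) j * (Z (j + 1) - Z j)) := by
      intro j _
      rw [xcount_cast_eq S, xcount_cast_eq S']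
      simp only [hZdef]; ring
    rw [Finset.sum_congr rfl e1, Finset.sum_neg_distrib,
      abel_identity (fun j => g (j + 1) - g j) Z n, hZn, hZ0]
    simp only [mul_zero, zero_sub, sub_zero, neg_neg, sub_neg_eq_add, neg_add_rev, zero_add,
      neg_zero]
  have hterm : ∀ j ∈ Finset.range n,
      0 ≤ ((g (j + 2) - g (j + 1)) - (g (j + 1) - g j)) * Z (j + 1) := by
    intro j hj
    rcases le_or_gt (j + 2) n with h | h
    · exact mul_nonneg (le_of_lt (sub_pos.2 (hconv j h))) (hZnonneg _)
    · have hj' : j < n := Finset.mem_range.1 hj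
      have hj1 : j + 1 = n := by omega
      rw [hj1, hZn, mul_zero]
  have hsum0 : 0 ≤ ∑ j ∈ Finset.range n,
      ((g (j + 2) - g (j + 1)) - (g (j + 1) - g j)) * Z (j + 1) :=
    Finset.sum_nonneg hterm
  refine ⟨by linarith [key, hsum0], ?_, ?_⟩
  · intro heq
    have hzero : ∑ j ∈ Finset.range n,
        ((g (j + 2) - g (j + 1)) - (g (j + 1) - g j)) * Z (j + 1) = 0 := by
      rw [← key]; linarith
    have hall := (Finset.sum_eq_zero_iff_of_nonneg hterm).1 hzero
    intro m
    rcases Nat.eq_zero_or_pos m with rfl | hm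
    · simp [prof]
    rcases le_or_gt n m with hnm | hmn
    · rw [prof_n_eq S hnm, prof_n_eq S' hnm]
    · have hmem : m - 1 ∈ Finset.range n := Finset.mem_range.2 (by omega)
      have hterm0 := hall (m - 1) hmem
      have hc := hconv (m - 1) (by omega)
      have hzm : Z (m - 1 + 1) = 0 := by
        rcases mul_eq_zero.1 hterm0 with h | h
        · exact absurd h (ne_of_gt (sub_pos.2 hc))
        · exact h
      have hm1 : m - 1 + 1 = m := by omega
      rw [hm1] at hzm
      have : (prof S' m : ℝ) = (prof S m : ℝ) := by
        have := sub_eq_zero.1 hzm; linarith [this]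
      exact (Nat.cast_injective this).symm
  · intro hallm
    rw [sum_cls_rep S g h0, sum_cls_rep S' g h0]
    apply Finset.sum_congr rfl
    intro j _
    have : (xcount S' (j + 1) : ℝ) = (xcount S (j + 1) : ℝ) := by
      rw [xcount_cast_eq S, xcount_cast_eq S', hallm (j + 1), hallm j]
    rw [this]

/-! ### The two convex weight functions -/

lemma choose_conv : ∀ j : ℕ, j + 2 ≤ n →
    ((j + 1).choose 2 : ℝ) - (j.choose 2 : ℝ) < ((j + 2).choose 2 : ℝ) - ((j + 1).choose 2 : ℝ) := by
  intro j _
  have h1 : (j + 1).choose 2 = j.choose 1 + j.choose 2 := Nat.choose_succ_succ j 1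
  have h2 : (j + 2).choose 2 = (j + 1).choose 1 + (j + 1).choose 2 := Nat.choose_succ_succ (j + 1) 1
  have e1 : (((j + 1).choose 2 : ℕ) : ℝ) = (j.choose 2 : ℝ) + j := by
    rw [h1, Nat.choose_one_right]; push_cast; ring
  have e2 : (((j + 2).choose 2 : ℕ) : ℝ) = ((j + 1).choose 2 : ℝ) + (j + 1) := by
    rw [h2, Nat.choose_one_right]; push_cast; ring
  rw [e2, e1]
  linarith

lemma mullog_conv : ∀ j : ℕ, j + 2 ≤ n →
    ((j + 1 : ℕ) : ℝ) * Real.logb 2 ((j + 1 : ℕ) : ℝ) - (j : ℝ) * Real.logb 2 (j : ℝ) <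
      ((j + 2 : ℕ) : ℝ) * Real.logb 2 ((j + 2 : ℕ) : ℝ) -
        ((j + 1 : ℕ) : ℝ) * Real.logb 2 ((j + 1 : ℕ) : ℝ) := by
  intro j _
  have hconv := Real.strictConvexOn_mul_log
  have hmid : ((j : ℝ) + 1) = (1 / 2 : ℝ) * j + (1 / 2 : ℝ) * (j + 2) := by ring
  have hstrict : ((j : ℝ) + 1) * Real.log ((j : ℝ) + 1) <
      (1 / 2 : ℝ) * ((j : ℝ) * Real.log j) + (1 / 2 : ℝ) * (((j : ℝ) + 2) * Real.log ((j : ℝ) + 2)) := by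
    have h := hconv.2 (Set.mem_Ici.2 (by positivity : (0:ℝ) ≤ (j : ℝ)))
      (Set.mem_Ici.2 (by positivity : (0:ℝ) ≤ (j : ℝ) + 2))
      (by norm_num : (j : ℝ) ≠ (j : ℝ) + 2) (by norm_num : (0:ℝ) < 1/2)
      (by norm_num : (0:ℝ) < 1/2) (by norm_num : (1/2 : ℝ) + 1/2 = 1)
    simp only [smul_eq_mul] at h
    rw [← hmid] at h
    simpa using h
  have hlog2 : (0 : ℝ) < Real.log 2 := Real.log_pos (by norm_num)
  simp only [Real.logb]
  push_cast
  have rearr : ∀ x y : ℝ, x * (y / Real.log 2) = (x * y) / Real.log 2 := fun x y => by ring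
  rw [rearr, rearr, rearr, div_sub_div_same, div_sub_div_same]
  rw [div_lt_div_iff_of_pos_right hlog2]
  linarith

/-! ### Entropy in terms of class sizes -/

noncomputable def esum (S : Setoid (Fin n)) : ℝ :=
  ∑ A ∈ cls S, (A.ncard : ℝ) * Real.logb 2 (A.ncard : ℝ)

lemma sum_cast_ncard (S : Setoid (Fin n)) : ∑ A ∈ cls S, (A.ncard : ℝ) = (n : ℝ) := by
  rw [← Nat.cast_sum]
  exact congrArg _ (sum_ncard_cls S)

lemma entropy_eq (hn : 1 ≤ n) (S : Setoid (Fin n)) :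
    entropy n S = Real.logb 2 n - esum S / n := by
  have hco : S.classes = ↑(cls S) := (Set.Finite.coe_toFinset _).symm
  rw [entropy, hco, finsum_mem_coe_finset]
  have hn0 : (n : ℝ) ≠ 0 := by positivity
  have hterm : ∀ A ∈ cls S, ((A.ncard : ℝ) / n) * Real.logb 2 ((A.ncard : ℝ) / n)
      = ((A.ncard : ℝ) * Real.logb 2 (A.ncard : ℝ)) / n - ((A.ncard : ℝ) * Real.logb 2 n) / n := by
    intro A hA
    have hc0 : (A.ncard : ℝ) ≠ 0 := by
      have := ncard_pos hA; positivity
    rw [Real.logb_div hc0 hn0]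
    ring
  rw [Finset.sum_congr rfl hterm, Finset.sum_sub_distrib, ← Finset.sum_div, ← Finset.sum_div,
    ← Finset.sum_mul, sum_cast_ncard S]
  rw [← esum]
  field_simp
  ring

/-! ### HD and VI over complements -/

lemma partSize_bot : partSize n (⊥ : Setoid (Fin n)) = 0 := by
  have : {p : Fin n × Fin n | p.1 < p.2 ∧ (⊥ : Setoid (Fin n)) p.1 p.2} = ∅ := by
    ext p
    simp only [Set.mem_setOf_eq, Set.mem_empty_iff_false, iff_false, not_and]
    intro hlt hrel
    have : p.1 = p.2 := hrel
    exact absurd this (ne_of_lt hlt)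
  rw [partSize, this, Set.ncard_empty]

lemma cls_bot_singleton {A : Set (Fin n)} (hA : A ∈ cls (⊥ : Setoid (Fin n))) :
    A.ncard = 1 := by
  rcases mem_cls.1 hA with ⟨y, rfl⟩
  have : {x : Fin n | (⊥ : Setoid (Fin n)) x y} = {y} := by
    ext x
    simp [Setoid.bot_def]
  rw [this, Set.ncard_singleton]

lemma entropy_bot (hn : 1 ≤ n) : entropy n (⊥ : Setoid (Fin n)) = Real.logb 2 n := by
  rw [entropy_eq hn]
  have : esum (⊥ : Setoid (Fin n)) = 0 := by
    apply Finset.sum_eq_zero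
    intro A hA
    rw [cls_bot_singleton hA]
    simp
  rw [this]
  simp

lemma HD_compl (P Q' : Setoid (Fin n)) (hme : P ⊓ Q' = ⊥) :
    HD n P Q' = (partSize n P : ℤ) + (partSize n Q' : ℤ) := by
  rw [HD, hme, partSize_bot]
  simp

lemma VI_compl (hn : 1 ≤ n) (P Q' : Setoid (Fin n)) (hme : P ⊓ Q' = ⊥) :
    VI n P Q' = 2 * Real.logb 2 n - entropy n P - entropy n Q' := by
  rw [VI, hme, entropy_bot hn]

/-! ### The rank bound: `#classes P + #classes Q' ≤ n + 1` when `P ⊔ Q' = ⊤` -/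

/-- The submodule of functions respecting a setoid. -/
def Usub (S : Setoid (Fin n)) : Submodule ℚ (Fin n → ℚ) where
  carrier := {f | ∀ x y : Fin n, S x y → f x = f y}
  add_mem' := by
    intro a b ha hb x y h
    simp only [Pi.add_apply, ha x y h, hb x y h]
  zero_mem' := by intro x y h; rfl
  smul_mem' := by
    intro c a ha x y h
    simp only [Pi.smul_apply, ha x y h]

/-- pullback along the quotient map -/
def quotLinear (S : Setoid (Fin n)) : (Quotient S → ℚ) →ₗ[ℚ] (Fin n → ℚ) where
  toFun g := fun x => g (Quotient.mk S x)
  map_add' := fun a b => rfl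
  map_smul' := fun c a => rfl

lemma quotLinear_inj (S : Setoid (Fin n)) : Function.Injective (quotLinear S) := by
  intro g g' h
  funext q
  induction q using Quotient.ind with
  | _ x => exact congrFun h x

lemma range_quotLinear (S : Setoid (Fin n)) :
    LinearMap.range (quotLinear S) = Usub S := by
  ext f
  constructor
  · rintro ⟨g, rfl⟩
    intro x y h
    simp only [quotLinear, LinearMap.coe_mk, AddHom.coe_mk]
    rw [@Quotient.sound _ S x y h]
  · intro hf
    refine ⟨fun q => Quotient.liftOn q f (fun a b h => hf a b h), ?_⟩
    funext x
    rfl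

lemma finrank_Usub (S : Setoid (Fin n)) : Module.finrank ℚ (Usub S) = (cls S).card := by
  classical
  letI : Fintype (Quotient S) := Fintype.ofFinite _
  rw [← range_quotLinear S, LinearMap.finrank_range_of_inj (quotLinear_inj S),
    Module.finrank_fintype_fun_eq_card]
  rw [← Nat.card_eq_fintype_card, Nat.card_congr (Setoid.quotientEquivClasses S),
    Nat.card_coe_set_eq, Set.ncard_eq_toFinset_card _ (Set.toFinite _)]
  rfl

lemma Usub_inf (P Q' : Setoid (Fin n)) : Usub P ⊓ Usub Q' = Usub (P ⊔ Q') := by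
  apply le_antisymm
  · rintro f ⟨hfP, hfQ⟩ x y h
    have hsup : (P ⊔ Q') x y := h
    rw [Setoid.sup_eq_eqvGen] at hsup
    have : ∀ a b : Fin n, Relation.EqvGen (fun x y => P x y ∨ Q' x y) a b → f a = f b := by
      intro a b hab
      induction hab with
      | rel a b hr => rcases hr with hr | hr
                      · exact hfP a b hr
                      · exact hfQ a b hr
      | refl a => rfl
      | symm a b _ ih => exact ih.symm
      | trans a b c _ _ ih1 ih2 => exact ih1.trans ih2
    exact this x y hsup
  · intro f hf
    refine ⟨fun x y h => hf x y ?_, fun x y h => hf x y ?_⟩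
    · exact (Setoid.le_def.1 (le_sup_left : P ≤ P ⊔ Q')) h
    · exact (Setoid.le_def.1 (le_sup_right : Q' ≤ P ⊔ Q')) h

lemma cls_top_card (hn : 1 ≤ n) : (cls (⊤ : Setoid (Fin n))).card = 1 := by
  have hx : (0 : ℕ) < n := hn
  have x0 : Fin n := ⟨0, hx⟩
  rw [Finset.card_eq_one]
  refine ⟨Set.univ, ?_⟩
  ext A
  simp only [Finset.mem_singleton, mem_cls]
  constructor
  · rintro ⟨y, rfl⟩
    ext x
    simp only [Set.mem_setOf_eq, Set.mem_univ, iff_true]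
    exact trivial
  · rintro rfl
    refine ⟨x0, ?_⟩
    ext x
    simp only [Set.mem_univ, Set.mem_setOf_eq, true_iff]
    exact trivial

lemma card_cls_add_le (hn : 1 ≤ n) (P Q' : Setoid (Fin n)) (hj : P ⊔ Q' = ⊤) :
    (cls P).card + (cls Q').card ≤ n + 1 := by
  classical
  have h1 := Submodule.finrank_sup_add_finrank_inf_eq (Usub P) (Usub Q')
  rw [Usub_inf, hj] at h1
  rw [finrank_Usub, finrank_Usub, finrank_Usub, cls_top_card hn] at h1
  have h2 : Module.finrank ℚ ↥(Usub P ⊔ Usub Q') ≤ n := by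
    have := Submodule.finrank_le (Usub P ⊔ Usub Q')
    rwa [Module.finrank_fintype_fun_eq_card, Fintype.card_fin] at this
  omega

/-! ### Profile bounds for complements -/

/-- Lower bound: any `≤ m` classes of `P` have total size at most `prof Q' m`,
for any complement `Q'`. -/
lemma sum_classes_le_prof (P Q' : Setoid (Fin n)) (hme : P ⊓ Q' = ⊥)
    (I : Finset (Set (Fin n))) (hI : I ⊆ cls P) {m : ℕ} (hm : I.card ≤ m) :
    ∑ A ∈ I, A.ncard ≤ prof Q' m := by
  classical
  set U : Finset (Fin n) := I.biUnion fset with hU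
  have hcardU : U.card = ∑ A ∈ I, A.ncard := by
    rw [hU, Finset.card_biUnion]
    · exact Finset.sum_congr rfl fun A _ => (ncard_eq_fset A).symm
    · intro A hA B hB hAB
      refine Finset.disjoint_left.2 fun x hx hx' => ?_
      exact cls_disjoint (hI hA) (hI hB) hAB (mem_fset.1 hx) (mem_fset.1 hx')
  set qc : Fin n → Set (Fin n) := fun x => {y | Q' y x} with hqc
  have hsplit : U.card = ∑ B ∈ cls Q', (U.filter (fun x => qc x = B)).card :=
    Finset.card_eq_sum_card_fiberwise (fun x _ => mem_cls.2 (Q'.mem_classes x))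
  have hbound : ∀ B ∈ cls Q', (U.filter (fun x => qc x = B)).card ≤ min B.ncard m := by
    intro B hB
    rw [le_min_iff]
    constructor
    · -- at most the size of B
      have hsub : U.filter (fun x => qc x = B) ⊆ fset B := by
        intro x hx
        rw [Finset.mem_filter] at hx
        rw [mem_fset, ← hx.2]
        exact Q'.refl' x
      simpa [ncard_eq_fset] using Finset.card_le_card hsub
    · -- at most m: elements lie in distinct P-classes, all within I
      set pc : Fin n → Set (Fin n) := fun x => {y | P y x} with hpc
      have hinj : Set.InjOn pc (U.filter (fun x => qc x = B)) := by
        intro x hx y hy hxy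
        rw [Finset.coe_filter, Set.mem_setOf_eq] at hx hy
        have hrelP : P x y := by
          have h' : P x y ∨ True := Or.inr trivial
          have hx' : x ∈ pc y := by rw [← hxy]; exact P.refl' x
          have : P x y := hx'
          exact this
        have hrelQ : Q' x y := by
          have hx2 : x ∈ B := by rw [← hx.2]; exact Q'.refl' x
          have hy2 : y ∈ B := by rw [← hy.2]; exact Q'.refl' y
          exact rel_of_mem_class hB hx2 hy2
        have : (P ⊓ Q') x y := ⟨hrelP, hrelQ⟩
        rw [hme] at this
        exact this
      have himage : ∀ x ∈ U.filter (fun x => qc x = B), pc x ∈ I := by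
        intro x hx
        rw [Finset.mem_filter] at hx
        rcases Finset.mem_biUnion.1 hx.1 with ⟨A, hA, hxA⟩
        have : pc x = A :=
          (class_eq_of_mem (hI hA) (mem_fset.1 hxA)).symm
        rw [this]; exact hA
      calc (U.filter (fun x => qc x = B)).card
          ≤ I.card := by
            apply Finset.card_le_card_of_injOn pc himage hinj
        _ ≤ m := hm
  calc ∑ A ∈ I, A.ncard = U.card := hcardU.symm
    _ = ∑ B ∈ cls Q', (U.filter (fun x => qc x = B)).card := hsplit
    _ ≤ ∑ B ∈ cls Q', min B.ncard m := Finset.sum_le_sum hbound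
    _ = prof Q' m := rfl

/-- Upper bound: `prof Q' m ≤ min ((n + 1 - k) * m) n` for any complement `Q'`. -/
lemma prof_le_min (hn : 1 ≤ n) (P Q' : Setoid (Fin n)) (hj : P ⊔ Q' = ⊤) (m : ℕ) :
    prof Q' m ≤ min ((n + 1 - (cls P).card) * m) n := by
  rw [le_min_iff]
  constructor
  · have h1 : prof Q' m ≤ (cls Q').card * m := by
      rw [prof, ← Finset.sum_const_nat (m := m) (fun _ _ => rfl)]
      exact Finset.sum_le_sum fun A _ => min_le_right _ _
    have h2 := card_cls_add_le hn P Q' hj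
    calc prof Q' m ≤ (cls Q').card * m := h1
      _ ≤ (n + 1 - (cls P).card) * m := by
          apply Nat.mul_le_mul_right
          omega
  · calc prof Q' m ≤ ∑ A ∈ cls Q', A.ncard :=
        Finset.sum_le_sum fun A _ => min_le_left _ _
      _ = n := sum_ncard_cls Q'

/-! ### The layered complement `Q0` -/

/-- rank of `x` within its `P`-class -/
noncomputable def rnk (P : Setoid (Fin n)) (x : Fin n) : ℕ :=
  ((fset {y | P y x}).filter (fun y => y < x)).card

/-- the layered complement: same rank within class -/
noncomputable def Q0 (P : Setoid (Fin n)) : Setoid (Fin n) := Setoid.ker (rnk P)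

lemma ker_rel (f : Fin n → ℕ) {x y : Fin n} : (Setoid.ker f) x y ↔ f x = f y := Iff.rfl

lemma rnk_lt_of_rel {P : Setoid (Fin n)} {x y : Fin n} (hrel : P x y) (hlt : x < y) :
    rnk P x < rnk P y := by
  have hsub : insert x ((fset {z | P z x}).filter (fun z => z < x)) ⊆
      (fset {z | P z y}).filter (fun z => z < y) := by
    intro z hz
    rcases Finset.mem_insert.1 hz with rfl | hz
    · exact Finset.mem_filter.2 ⟨mem_fset.2 hrel, hlt⟩
    · rw [Finset.mem_filter] at hz ⊢
      have hz1 : z ∈ {w | P w x} := mem_fset.1 hz.1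
      have hz2 : P z x := hz1
      exact ⟨mem_fset.2 (P.trans' hz2 hrel), lt_trans hz.2 hlt⟩
  have hx : x ∉ (fset {z | P z x}).filter (fun z => z < x) := by
    simp [Finset.mem_filter]
  calc rnk P x < rnk P x + 1 := Nat.lt_succ_self _
    _ = (insert x ((fset {z | P z x}).filter (fun z => z < x))).card := by
        rw [Finset.card_insert_of_notMem hx, rnk]
    _ ≤ rnk P y := Finset.card_le_card hsub

lemma rel_rnk_eq {P : Setoid (Fin n)} {x y : Fin n} (hrel : P x y)
    (hr : rnk P x = rnk P y) : x = y := by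
  rcases lt_trichotomy x y with h | h | h
  · exact absurd hr (ne_of_lt (rnk_lt_of_rel hrel h))
  · exact h
  · exact absurd hr.symm (ne_of_lt (rnk_lt_of_rel (P.symm' hrel) h))

lemma Q0_meet (P : Setoid (Fin n)) : P ⊓ Q0 P = ⊥ := by
  apply le_antisymm _ bot_le
  rw [Setoid.le_def]
  intro x y h
  rcases Setoid.inf_iff_and.1 h with ⟨h1, h2⟩
  show (⊥ : Setoid (Fin n)) x y
  rw [Setoid.bot_def]
  exact rel_rnk_eq h1 h2

/-- minimal element of the `P`-class of `x` -/
noncomputable def mcl (P : Setoid (Fin n)) (x : Fin n) : Fin n :=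
  (fset {y | P y x}).min' ⟨x, mem_fset.2 (P.refl' x)⟩

lemma mcl_rel (P : Setoid (Fin n)) (x : Fin n) : P (mcl P x) x := by
  have h := (fset {y | P y x}).min'_mem ⟨x, mem_fset.2 (P.refl' x)⟩
  have h2 : mcl P x ∈ {y | P y x} := mem_fset.1 h
  exact h2

lemma rnk_mcl (P : Setoid (Fin n)) (x : Fin n) : rnk P (mcl P x) = 0 := by
  rw [rnk, Finset.card_eq_zero, Finset.filter_eq_empty_iff]
  intro z hz
  have hz0 : z ∈ {y | P y (mcl P x)} := mem_fset.1 hz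
  have hz1 : P z (mcl P x) := hz0
  have hz' : P z x := P.trans' hz1 (mcl_rel P x)
  have : mcl P x ≤ z := (fset {y | P y x}).min'_le z (mem_fset.2 hz')
  exact not_lt.2 this

lemma Q0_join (P : Setoid (Fin n)) : P ⊔ Q0 P = ⊤ := by
  apply le_antisymm le_top
  rw [Setoid.le_def]
  intro x y _
  set S := P ⊔ Q0 P with hS
  have hx : S x (mcl P x) := Setoid.le_def.1 (le_sup_left : P ≤ S) (P.symm' (mcl_rel P x))
  have hq : S (mcl P x) (mcl P y) := by
    apply Setoid.le_def.1 (le_sup_right : Q0 P ≤ S)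
    show (Setoid.ker (rnk P)) (mcl P x) (mcl P y)
    rw [ker_rel, rnk_mcl, rnk_mcl]
  have hy : S (mcl P y) y := Setoid.le_def.1 (le_sup_left : P ≤ S) (mcl_rel P y)
  exact S.trans' (S.trans' hx hq) hy

/-- In a finset `s` with `j < s.card` there is an element with exactly `j`
smaller elements of `s`. -/
lemma exists_initial (s : Finset (Fin n)) : ∀ j, j < s.card →
    ∃ z ∈ s, (s.filter (fun y => y < z)).card = j := by
  intro j
  induction j with
  | zero =>
    intro hj
    have hne : s.Nonempty := Finset.card_pos.1 hj
    refine ⟨s.min' hne, s.min'_mem hne, ?_⟩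
    rw [Finset.card_eq_zero, Finset.filter_eq_empty_iff]
    intro z hz
    exact not_lt.2 (s.min'_le z hz)
  | succ j ih =>
    intro hj
    obtain ⟨z, hz, hcard⟩ := ih (Nat.lt_of_succ_lt hj)
    have hle : (s.filter (fun y => y ≤ z)).card = j + 1 := by
      have : s.filter (fun y => y ≤ z) = insert z (s.filter (fun y => y < z)) := by
        ext y
        simp only [Finset.mem_filter, Finset.mem_insert]
        constructor
        · rintro ⟨hy, hyz⟩
          rcases eq_or_lt_of_le hyz with h | h
          · exact Or.inl h
          · exact Or.inr ⟨hy, h⟩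
        · rintro (rfl | ⟨hy, hyz⟩)
          · exact ⟨hz, le_refl _⟩
          · exact ⟨hy, le_of_lt hyz⟩
      rw [this, Finset.card_insert_of_notMem (by simp), hcard]
    set t := s.filter (fun y => z < y) with ht
    have htcard : t.card = s.card - (j + 1) := by
      have hsplit : (s.filter (fun y => y ≤ z)).card + (s.filter (fun y => ¬ y ≤ z)).card
          = s.card := Finset.card_filter_add_card_filter_not _
      have heq : t = s.filter (fun y => ¬ y ≤ z) := by
        ext y; simp [ht, not_le]
      rw [heq]
      omega
    have htne : t.Nonempty := by
      rw [← Finset.card_pos, htcard]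
      omega
    refine ⟨t.min' htne, (Finset.mem_filter.1 (t.min'_mem htne)).1, ?_⟩
    have hmin := t.min'_mem htne
    rw [Finset.mem_filter] at hmin
    have : s.filter (fun y => y < t.min' htne) = s.filter (fun y => y ≤ z) := by
      ext y
      simp only [Finset.mem_filter, and_congr_right_iff]
      intro hy
      constructor
      · intro hlt
        by_contra hyz
        have : z < y := not_le.1 hyz
        have hyt : y ∈ t := Finset.mem_filter.2 ⟨hy, this⟩
        exact absurd (t.min'_le y hyt) (not_le.2 hlt)
      · intro hyz
        exact lt_of_le_of_lt hyz hmin.2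
    rw [this, hle]

/-- the size of the `j`-th layer -/
noncomputable def lam (P : Setoid (Fin n)) (j : ℕ) : ℕ :=
  (Finset.univ.filter (fun x => rnk P x = j)).card

lemma pc_eq_class {P : Setoid (Fin n)} {A : Set (Fin n)} (hA : A ∈ cls P) {z : Fin n}
    (hz : z ∈ A) : {y | P y z} = A := (class_eq_of_mem hA hz).symm

lemma lam_eq_card_big (P : Setoid (Fin n)) (j : ℕ) :
    lam P j = ((cls P).filter (fun A => j < A.ncard)).card := by
  classical
  apply Finset.card_bij (fun x _ => ({y | P y x} : Set (Fin n)))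
  · intro x hx
    rw [Finset.mem_filter] at hx
    rw [Finset.mem_filter]
    refine ⟨class_mem_cls P x, ?_⟩
    have hsub : insert x ((fset {y | P y x}).filter (fun y => y < x)) ⊆
        fset {y | P y x} := by
      intro z hz
      rcases Finset.mem_insert.1 hz with heq | hz
      · rw [heq]; exact mem_fset.2 (P.refl' x)
      · exact (Finset.mem_filter.1 hz).1
    have hxx : x ∉ (fset {y | P y x}).filter (fun y => y < x) := by
      simp [Finset.mem_filter]
    have : j + 1 ≤ (fset {y | P y x}).card := by
      calc j + 1 = (insert x ((fset {y | P y x}).filter (fun y => y < x))).card := by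
            rw [Finset.card_insert_of_notMem hxx]
            have : rnk P x = j := hx.2
            rw [← this]; rfl
        _ ≤ _ := Finset.card_le_card hsub
    rw [ncard_eq_fset]
    omega
  · intro x hx x' hx' hxx'
    rw [Finset.mem_filter] at hx hx'
    have hrel : P x x' := by
      have : x ∈ ({y | P y x'} : Set (Fin n)) := by rw [← hxx']; exact P.refl' x
      exact this
    exact rel_rnk_eq hrel (by rw [hx.2, hx'.2])
  · intro A hA
    rw [Finset.mem_filter] at hA
    have hcard : j < (fset A).card := by rw [← ncard_eq_fset]; exact hA.2
    obtain ⟨z, hz, hcnt⟩ := exists_initial (fset A) j hcard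
    refine ⟨z, Finset.mem_filter.2 ⟨Finset.mem_univ z, ?_⟩, pc_eq_class hA.1 (mem_fset.1 hz)⟩
    rw [rnk]
    have : fset {y | P y z} = fset A := by
      apply Finset.ext
      intro w
      rw [mem_fset, mem_fset, pc_eq_class hA.1 (mem_fset.1 hz)]
    rw [this, hcnt]

lemma rnk_lt_n (P : Setoid (Fin n)) (x : Fin n) : rnk P x < n := by
  have hsub : (fset {y | P y x}).filter (fun y => y < x) ⊆ Finset.univ.erase x := by
    intro z hz
    rw [Finset.mem_filter] at hz
    exact Finset.mem_erase.2 ⟨ne_of_lt hz.2, Finset.mem_univ z⟩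
  have h1 : rnk P x ≤ (Finset.univ.erase x).card := Finset.card_le_card hsub
  have h2 : (Finset.univ.erase x).card = n - 1 := by
    rw [Finset.card_erase_of_mem (Finset.mem_univ x)]
    simp
  have hn : 1 ≤ n := by
    have : 0 < Fintype.card (Fin n) := Fintype.card_pos_iff.2 ⟨x⟩
    simp at this; omega
  omega

/-- `prof` of a kernel setoid in terms of fibre sizes. -/
lemma prof_ker (f : Fin n → ℕ) (m : ℕ) :
    prof (Setoid.ker f) m =
      ∑ v ∈ Finset.univ.image f, min ((Finset.univ.filter (fun x => f x = v)).card) m := by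
  classical
  have hcls : cls (Setoid.ker f) =
      (Finset.univ.image f).image (fun v => ({x | f x = v} : Set (Fin n))) := by
    apply Finset.ext
    intro A
    rw [mem_cls, Finset.mem_image]
    constructor
    · rintro ⟨y, rfl⟩
      exact ⟨f y, Finset.mem_image.2 ⟨y, Finset.mem_univ y, rfl⟩, rfl⟩
    · rintro ⟨v, hv, rfl⟩
      rcases Finset.mem_image.1 hv with ⟨y, _, rfl⟩
      exact ⟨y, rfl⟩
  rw [prof, hcls, Finset.sum_image]
  · apply Finset.sum_congr rfl
    intro v hv
    have : ({x | f x = v} : Set (Fin n)).ncard = (Finset.univ.filter (fun x => f x = v)).card := by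
      rw [ncard_eq_fset]
      congr 1
      apply Finset.ext
      intro x
      rw [mem_fset]
      simp
    rw [this]
  · intro v hv v' hv' heq
    rcases Finset.mem_image.1 hv with ⟨y, _, rfl⟩
    have h1 : y ∈ ({x | f x = f y} : Set (Fin n)) := rfl
    rw [show ({x | f x = f y} : Set (Fin n)) = {x | f x = v'} from heq] at h1
    have h2 : f y = v' := h1
    exact h2

lemma prof_Q0 (P : Setoid (Fin n)) (m : ℕ) :
    prof (Q0 P) m = ∑ j ∈ Finset.range n, min (lam P j) m := by
  rw [Q0, prof_ker]
  apply Finset.sum_subset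
  · intro v hv
    rcases Finset.mem_image.1 hv with ⟨x, _, rfl⟩
    exact Finset.mem_range.2 (rnk_lt_n P x)
  · intro v _ hv
    have h0 : (Finset.univ.filter (fun x => rnk P x = v)).card = 0 := by
      rw [Finset.card_eq_zero, Finset.filter_eq_empty_iff]
      intro x _
      intro hx
      exact hv (Finset.mem_image.2 ⟨x, Finset.mem_univ x, hx⟩)
    rw [h0]
    simp

lemma sum_ncard_eq_sum_counts (I : Finset (Set (Fin n))) :
    ∑ A ∈ I, A.ncard = ∑ j ∈ Finset.range n, (I.filter (fun A => j < A.ncard)).card := by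
  have hA : ∀ A ∈ I, A.ncard = ∑ j ∈ Finset.range n, if j < A.ncard then 1 else 0 := by
    intro A _
    rw [← Finset.sum_filter]
    have : (Finset.range n).filter (fun j => j < A.ncard) = Finset.range A.ncard := by
      ext j
      simp only [Finset.mem_filter, Finset.mem_range]
      exact ⟨fun h => h.2, fun h => ⟨lt_of_lt_of_le h ncard_le_n, h⟩⟩
    rw [this]; simp
  rw [Finset.sum_congr rfl hA, Finset.sum_comm]
  exact Finset.sum_congr rfl fun j _ => (Finset.card_filter _ _).symm

/-- `Q0 P` has the pointwise smallest profile among complements of `P`. -/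
lemma prof_Q0_le (P Q' : Setoid (Fin n)) (hme : P ⊓ Q' = ⊥) (m : ℕ) :
    prof (Q0 P) m ≤ prof Q' m := by
  classical
  set s : Finset (Finset (Set (Fin n))) :=
    ((cls P).powerset.filter (fun I => I.card ≤ m)) with hs
  have hsne : s.Nonempty := ⟨∅, by simp [hs]⟩
  obtain ⟨I, hIs, hImax⟩ := Finset.exists_max_image s (fun I => ∑ A ∈ I, A.ncard) hsne
  rw [hs, Finset.mem_filter, Finset.mem_powerset] at hIs
  obtain ⟨hIsub, hIcard⟩ := hIs
  have hQ0 : prof (Q0 P) m ≤ ∑ A ∈ I, A.ncard := by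
    rw [prof_Q0, sum_ncard_eq_sum_counts]
    apply Finset.sum_le_sum
    intro j hj
    by_contra hcon
    rw [not_le, lt_min_iff] at hcon
    obtain ⟨hlt_lam, hlt_m⟩ := hcon
    have hex : ∃ B ∈ (cls P).filter (fun A => j < A.ncard),
        B ∉ I.filter (fun A => j < A.ncard) := by
      by_contra hno
      push_neg at hno
      have := Finset.card_le_card (fun B hB => hno B hB)
      rw [lam_eq_card_big] at hlt_lam
      omega
    obtain ⟨B, hB, hBnot⟩ := hex
    rw [Finset.mem_filter] at hB
    have hBnotI : B ∉ I := fun hBI => hBnot (Finset.mem_filter.2 ⟨hBI, hB.2⟩)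
    rcases lt_or_eq_of_le hIcard with hcase | hcase
    · have hmem : insert B I ∈ s := by
        rw [hs, Finset.mem_filter, Finset.mem_powerset]
        constructor
        · exact Finset.insert_subset hB.1 hIsub
        · rw [Finset.card_insert_of_notMem hBnotI]; omega
      have hm2 := hImax _ hmem
      rw [Finset.sum_insert hBnotI] at hm2
      have hBpos : 1 ≤ B.ncard := ncard_pos hB.1
      omega
    · have hexA : ∃ A ∈ I, ¬ j < A.ncard := by
        by_contra hno
        push_neg at hno
        have heqf : I.filter (fun A => j < A.ncard) = I := Finset.filter_eq_self.2 hno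
        rw [heqf] at hlt_m
        omega
      obtain ⟨A, hAI, hAsmall⟩ := hexA
      rw [not_lt] at hAsmall
      have hBnotE : B ∉ I.erase A := fun h => hBnotI (Finset.mem_of_mem_erase h)
      have hmem : insert B (I.erase A) ∈ s := by
        rw [hs, Finset.mem_filter, Finset.mem_powerset]
        constructor
        · exact Finset.insert_subset hB.1 ((Finset.erase_subset _ _).trans hIsub)
        · rw [Finset.card_insert_of_notMem hBnotE, Finset.card_erase_of_mem hAI]
          omega
      have hmax := hImax _ hmem
      rw [Finset.sum_insert hBnotE] at hmax
      have hsplit : A.ncard + ∑ X ∈ I.erase A, X.ncard = ∑ X ∈ I, X.ncard :=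
        Finset.add_sum_erase _ _ hAI
      have hBbig : j < B.ncard := hB.2
      omega
  calc prof (Q0 P) m ≤ ∑ A ∈ I, A.ncard := hQ0
    _ ≤ prof Q' m := sum_classes_le_prof P Q' hme I hIsub hIcard

/-! ### The balanced complement `Q1`: keys and positions -/

/-- size of the class of `x` -/
noncomputable def scls (P : Setoid (Fin n)) (x : Fin n) : ℕ :=
  (fset {y | P y x}).card

/-- class key: ascending in (size, min element) -/
noncomputable def bkey (P : Setoid (Fin n)) (x : Fin n) : ℕ :=
  (mcl P x).val + scls P x * n

/-- element key: lexicographic in (rank, class key) -/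
noncomputable def ekey (P : Setoid (Fin n)) (x : Fin n) : ℕ :=
  bkey P x + rnk P x * (n * n + n)

/-- position in the ascending column-major order -/
noncomputable def pos (P : Setoid (Fin n)) (x : Fin n) : ℕ :=
  (Finset.univ.filter (fun z => ekey P z < ekey P x)).card

lemma class_set_eq {P : Setoid (Fin n)} {x y : Fin n} (hrel : P x y) :
    {z | P z x} = {z | P z y} := by
  ext z
  simp only [Set.mem_setOf_eq]
  exact ⟨fun h => P.trans' h hrel, fun h => P.trans' h (P.symm' hrel)⟩

lemma scls_eq_of_rel {P : Setoid (Fin n)} {x y : Fin n} (hrel : P x y) :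
    scls P x = scls P y := by
  rw [scls, scls, class_set_eq hrel]

lemma mcl_eq_of_rel {P : Setoid (Fin n)} {x y : Fin n} (hrel : P x y) :
    mcl P x = mcl P y := by
  rw [mcl, mcl]
  congr 1
  rw [class_set_eq hrel]

lemma bkey_eq_of_rel {P : Setoid (Fin n)} {x y : Fin n} (hrel : P x y) :
    bkey P x = bkey P y := by
  rw [bkey, bkey, scls_eq_of_rel hrel, mcl_eq_of_rel hrel]

lemma scls_le_n (P : Setoid (Fin n)) (x : Fin n) : scls P x ≤ n := by
  rw [scls]
  simpa using Finset.card_le_card (Finset.subset_univ (fset {y | P y x}))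

lemma bkey_lt_bound (P : Setoid (Fin n)) (x : Fin n) : bkey P x < n * n + n := by
  have h1 : (mcl P x).val < n := (mcl P x).isLt
  have h2 : scls P x * n ≤ n * n := Nat.mul_le_mul_right n (scls_le_n P x)
  rw [bkey]
  omega

/-- lexicographic comparison of combined keys -/
lemma natlex {B a b a' b' : ℕ} (hb : b < B) (hb' : b' < B) :
    b + a * B < b' + a' * B ↔ a < a' ∨ (a = a' ∧ b < b') := by
  constructor
  · intro h
    rcases lt_trichotomy a a' with hc | hc | hc
    · exact Or.inl hc
    · right
      refine ⟨hc, ?_⟩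
      rw [hc] at h
      omega
    · exfalso
      have hstep : a' * B + B ≤ a * B := by
        have h1 : a' + 1 ≤ a := hc
        calc a' * B + B = (a' + 1) * B := by ring
          _ ≤ a * B := Nat.mul_le_mul_right B h1
      have h2 : b' + a' * B < b + a * B := by
        calc b' + a' * B < B + a' * B := by omega
          _ = a' * B + B := by ring
          _ ≤ a * B := hstep
          _ ≤ b + a * B := Nat.le_add_left _ _
      exact lt_asymm h h2
  · rintro (h | ⟨rfl, h⟩)
    · have hstep : a * B + B ≤ a' * B := by
        have h1 : a + 1 ≤ a' := h
        calc a * B + B = (a + 1) * B := by ring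
          _ ≤ a' * B := Nat.mul_le_mul_right B h1
      calc b + a * B < B + a * B := by omega
        _ = a * B + B := by ring
        _ ≤ a' * B := hstep
        _ ≤ b' + a' * B := Nat.le_add_left _ _
    · omega

lemma ekey_lt_iff {P : Setoid (Fin n)} {x y : Fin n} :
    ekey P x < ekey P y ↔
      rnk P x < rnk P y ∨ (rnk P x = rnk P y ∧ bkey P x < bkey P y) := by
  rw [ekey, ekey]
  exact natlex (bkey_lt_bound P x) (bkey_lt_bound P y)

lemma bkey_rel {P : Setoid (Fin n)} {x y : Fin n} (h : bkey P x = bkey P y) :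
    P x y := by
  have hvx : (mcl P x).val < n := (mcl P x).isLt
  have hvy : (mcl P y).val < n := (mcl P y).isLt
  have hmod : ((mcl P x).val + scls P x * n) % n = ((mcl P y).val + scls P y * n) % n := by
    rw [bkey, bkey] at h
    rw [h]
  rw [Nat.add_mul_mod_self_right, Nat.add_mul_mod_self_right,
    Nat.mod_eq_of_lt hvx, Nat.mod_eq_of_lt hvy] at hmod
  have hm : mcl P x = mcl P y := Fin.ext hmod
  have h1 : P x (mcl P x) := P.symm' (mcl_rel P x)
  rw [hm] at h1
  exact P.trans' h1 (mcl_rel P y)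

lemma ekey_inj {P : Setoid (Fin n)} {x y : Fin n} (h : ekey P x = ekey P y) : x = y := by
  have hx := bkey_lt_bound P x
  have hy := bkey_lt_bound P y
  rw [ekey, ekey] at h
  have hBpos : 0 < n * n + n := by
    have := (mcl P x).isLt
    omega
  have hr : rnk P x = rnk P y := by
    have hdiv := congrArg (fun t => t / (n * n + n)) h
    simpa [Nat.add_mul_div_right _ _ hBpos, Nat.div_eq_of_lt hx, Nat.div_eq_of_lt hy] using hdiv
  rw [hr] at h
  have hb : bkey P x = bkey P y := by omega
  exact rel_rnk_eq (bkey_rel hb) hr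

lemma pos_mono {P : Setoid (Fin n)} {x y : Fin n} (h : ekey P x < ekey P y) :
    pos P x < pos P y := by
  have hsub : insert x (Finset.univ.filter (fun z => ekey P z < ekey P x)) ⊆
      Finset.univ.filter (fun z => ekey P z < ekey P y) := by
    intro z hz
    rcases Finset.mem_insert.1 hz with heq | hz
    · rw [heq]; exact Finset.mem_filter.2 ⟨Finset.mem_univ x, h⟩
    · rw [Finset.mem_filter] at hz ⊢
      exact ⟨hz.1, lt_trans hz.2 h⟩
  have hnx : x ∉ Finset.univ.filter (fun z => ekey P z < ekey P x) := by
    simp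
  calc pos P x < pos P x + 1 := Nat.lt_succ_self _
    _ = (insert x (Finset.univ.filter (fun z => ekey P z < ekey P x))).card := by
        rw [Finset.card_insert_of_notMem hnx, pos]
    _ ≤ pos P y := Finset.card_le_card hsub

lemma pos_inj {P : Setoid (Fin n)} {x y : Fin n} (h : pos P x = pos P y) : x = y := by
  rcases lt_trichotomy (ekey P x) (ekey P y) with hc | hc | hc
  · exact absurd h (ne_of_lt (pos_mono hc))
  · exact ekey_inj hc
  · exact absurd h.symm (ne_of_lt (pos_mono hc))

lemma pos_lt_n (P : Setoid (Fin n)) (x : Fin n) : pos P x < n := by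
  have hsub : Finset.univ.filter (fun z => ekey P z < ekey P x) ⊆ Finset.univ.erase x := by
    intro z hz
    rw [Finset.mem_filter] at hz
    refine Finset.mem_erase.2 ⟨?_, Finset.mem_univ z⟩
    intro heq
    rw [heq] at hz
    exact absurd hz.2 (lt_irrefl _)
  have h1 : pos P x ≤ (Finset.univ.erase x).card := Finset.card_le_card hsub
  have h2 : (Finset.univ.erase x).card = n - 1 := by
    rw [Finset.card_erase_of_mem (Finset.mem_univ x)]; simp
  have hn : 1 ≤ n := by
    have : 0 < Fintype.card (Fin n) := Fintype.card_pos_iff.2 ⟨x⟩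
    simp at this; omega
  omega

lemma pos_surj (P : Setoid (Fin n)) {p : ℕ} (hp : p < n) : ∃ x, pos P x = p := by
  classical
  have himg : Finset.univ.image (pos P) ⊆ Finset.range n := by
    intro v hv
    rcases Finset.mem_image.1 hv with ⟨x, _, rfl⟩
    exact Finset.mem_range.2 (pos_lt_n P x)
  have hcard : (Finset.univ.image (pos P)).card = n := by
    rw [Finset.card_image_of_injective _ (fun x y h => pos_inj h)]
    simp
  have heq : Finset.univ.image (pos P) = Finset.range n :=
    Finset.eq_of_subset_of_card_le himg (by rw [hcard, Finset.card_range])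
  have : p ∈ Finset.univ.image (pos P) := by
    rw [heq]; exact Finset.mem_range.2 hp
  rcases Finset.mem_image.1 this with ⟨x, _, hx⟩
  exact ⟨x, hx⟩

lemma pos_split (P : Setoid (Fin n)) (y : Fin n) :
    pos P y = (Finset.univ.filter (fun z => rnk P z < rnk P y)).card +
      (Finset.univ.filter (fun z => rnk P z = rnk P y ∧ bkey P z < bkey P y)).card := by
  classical
  have hfe : Finset.univ.filter (fun z => ekey P z < ekey P y) =
      Finset.univ.filter (fun z => rnk P z < rnk P y ∨
        (rnk P z = rnk P y ∧ bkey P z < bkey P y)) := by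
    apply Finset.filter_congr
    intro z _
    rw [ekey_lt_iff]
  have hdis : Disjoint (Finset.univ.filter (fun z => rnk P z < rnk P y))
      (Finset.univ.filter (fun z => rnk P z = rnk P y ∧ bkey P z < bkey P y)) := by
    refine Finset.disjoint_left.2 fun z hz hz' => ?_
    rw [Finset.mem_filter] at hz hz'
    omega
  rw [pos, hfe, Finset.filter_or, Finset.card_union_of_disjoint hdis]

lemma pos_mcl (P : Setoid (Fin n)) (y : Fin n) :
    pos P (mcl P y) =
      (Finset.univ.filter (fun z => rnk P z = 0 ∧ bkey P z < bkey P y)).card := by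
  classical
  rw [pos_split P (mcl P y)]
  have h0 : rnk P (mcl P y) = 0 := rnk_mcl P y
  have hb : bkey P (mcl P y) = bkey P y := bkey_eq_of_rel (mcl_rel P y)
  have h1 : (Finset.univ.filter (fun z => rnk P z < rnk P (mcl P y))).card = 0 := by
    rw [Finset.card_eq_zero, Finset.filter_eq_empty_iff]
    intro z _
    rw [h0]
    omega
  rw [h1, zero_add]
  congr 1
  apply Finset.filter_congr
  intro z _
  rw [h0, hb]

lemma rnk_lt_scls (P : Setoid (Fin n)) (x : Fin n) : rnk P x < scls P x := by
  have hsub : insert x ((fset {y | P y x}).filter (fun y => y < x)) ⊆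
      fset {y | P y x} := by
    intro z hz
    rcases Finset.mem_insert.1 hz with heq | hz
    · rw [heq]; exact mem_fset.2 (P.refl' x)
    · exact (Finset.mem_filter.1 hz).1
  have hxx : x ∉ (fset {y | P y x}).filter (fun y => y < x) := by
    simp [Finset.mem_filter]
  calc rnk P x < rnk P x + 1 := Nat.lt_succ_self _
    _ = (insert x ((fset {y | P y x}).filter (fun y => y < x))).card := by
        rw [Finset.card_insert_of_notMem hxx, rnk]
    _ ≤ scls P x := Finset.card_le_card hsub

lemma bkey_le_scls {P : Setoid (Fin n)} {y z : Fin n} (h : bkey P y ≤ bkey P z) :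
    scls P y ≤ scls P z := by
  by_contra hc
  rw [not_le] at hc
  have hv : (mcl P y).val < n := (mcl P y).isLt
  have : bkey P z < bkey P y := by
    rw [bkey, bkey]
    have h1 : scls P z + 1 ≤ scls P y := hc
    have h2 : (scls P z + 1) * n ≤ scls P y * n := Nat.mul_le_mul_right n h1
    have hvz : (mcl P z).val < n := (mcl P z).isLt
    have : scls P z * n + n ≤ scls P y * n := by
      calc scls P z * n + n = (scls P z + 1) * n := by ring
        _ ≤ scls P y * n := h2
    omega
  omega

/-- the rank-`j` element of the class of `z` (when it exists) -/
noncomputable def jelt (P : Setoid (Fin n)) (j : ℕ) (z : Fin n) : Fin n :=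
  if h : j < (fset {w | P w z}).card then
    Classical.choose (exists_initial (fset {w | P w z}) j h)
  else z

lemma jelt_spec {P : Setoid (Fin n)} {j : ℕ} {z : Fin n} (h : j < scls P z) :
    P (jelt P j z) z ∧ rnk P (jelt P j z) = j := by
  rw [scls] at h
  rw [jelt, dif_pos h]
  obtain ⟨hmem, hcnt⟩ := Classical.choose_spec (exists_initial (fset {w | P w z}) j h)
  set w := Classical.choose (exists_initial (fset {w | P w z}) j h) with hw
  have hrel0 : w ∈ {v | P v z} := mem_fset.1 hmem
  have hrel : P w z := hrel0
  refine ⟨hrel, ?_⟩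
  rw [rnk]
  have hcl : fset {v | P v w} = fset {v | P v z} := by
    congr 1
    exact class_set_eq hrel
  rw [hcl]
  exact hcnt

lemma lam_zero (P : Setoid (Fin n)) : lam P 0 = (cls P).card := by
  rw [lam_eq_card_big]
  congr 1
  apply Finset.filter_true_of_mem
  intro A hA
  exact ncard_pos hA

lemma card_filter_split (s : Finset (Fin n)) (p q : Fin n → Prop) :
    (s.filter (fun x => p x)).card =
      (s.filter (fun x => p x ∧ q x)).card + (s.filter (fun x => p x ∧ ¬ q x)).card := by
  classical
  rw [← Finset.filter_filter, ← Finset.filter_filter]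
  exact (Finset.card_filter_add_card_filter_not _).symm

/-- The key inequality: `pos y ≤ (n - k) + pos (mcl y)`. -/
lemma claimU (P : Setoid (Fin n)) (y : Fin n) :
    pos P y ≤ (n - (cls P).card) + pos P (mcl P y) := by
  classical
  set j := rnk P y with hj
  set b := bkey P y with hb
  rcases Nat.eq_zero_or_pos j with hj0 | hjpos
  · -- y is the minimum of its class
    have : y = mcl P y := by
      apply rel_rnk_eq (P.symm' (mcl_rel P y))
      rw [rnk_mcl, ← hj0, hj]
    rw [← this]
    omega
  · set k := (cls P).card with hk
    set F1 := Finset.univ.filter (fun z => rnk P z < j) with hF1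
    set F2 := Finset.univ.filter (fun z => rnk P z = j ∧ bkey P z < b) with hF2
    set F0 := Finset.univ.filter (fun z => rnk P z = 0 ∧ bkey P z < b) with hF0
    set G0 := Finset.univ.filter (fun z => rnk P z = 0 ∧ ¬ bkey P z < b) with hG0
    set M := Finset.univ.filter (fun z => 1 ≤ rnk P z ∧ rnk P z < j) with hM
    set R1 := Finset.univ.filter (fun z => 1 ≤ rnk P z) with hR1
    set Rj := Finset.univ.filter (fun z => j ≤ rnk P z) with hRj
    have hpos : pos P y = F1.card + F2.card := pos_split P y
    have hmcl : pos P (mcl P y) = F0.card := pos_mcl P y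
    have hA : (Finset.univ.filter (fun z => rnk P z = 0)).card = k := by
      rw [hk, ← lam_zero P, lam]
    -- F1 = (rnk = 0) ⊔ M
    have h1 : F1.card = k + M.card := by
      have : F1 = Finset.univ.filter (fun z => rnk P z = 0 ∨ (1 ≤ rnk P z ∧ rnk P z < j)) := by
        apply Finset.filter_congr
        intro z _
        constructor
        · intro hlt
          rcases Nat.eq_zero_or_pos (rnk P z) with h0 | h0
          · exact Or.inl h0
          · exact Or.inr ⟨h0, hlt⟩
        · rintro (h0 | ⟨_, hlt⟩)
          · rw [h0]; exact hjpos
          · exact hlt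
      have hdis : Disjoint (Finset.univ.filter (fun z => rnk P z = 0))
          (Finset.univ.filter (fun z => 1 ≤ rnk P z ∧ rnk P z < j)) := by
        refine Finset.disjoint_left.2 fun z hz hz' => ?_
        rw [Finset.mem_filter] at hz hz'
        omega
      rw [this, Finset.filter_or, Finset.card_union_of_disjoint hdis, hA]
    -- n = k + R1
    have h2 : n = k + R1.card := by
      have hsplit := Finset.card_filter_add_card_filter_not
        (s := (Finset.univ : Finset (Fin n))) (p := fun z => rnk P z = 0)
      have hcongr : Finset.univ.filter (fun z => ¬ rnk P z = 0) = R1 := by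
        apply Finset.filter_congr
        intro z _
        omega
      rw [hcongr, hA] at hsplit
      rw [hsplit]
      simp
    -- R1 = M ⊔ Rj
    have h3 : R1.card = M.card + Rj.card := by
      have : R1 = Finset.univ.filter (fun z => (1 ≤ rnk P z ∧ rnk P z < j) ∨ j ≤ rnk P z) := by
        apply Finset.filter_congr
        intro z _
        constructor
        · intro h0
          rcases lt_or_ge (rnk P z) j with hc | hc
          · exact Or.inl ⟨h0, hc⟩
          · exact Or.inr hc
        · rintro (⟨h0, _⟩ | hc)
          · exact h0
          · omega
      have hdis : Disjoint (Finset.univ.filter (fun z => 1 ≤ rnk P z ∧ rnk P z < j))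
          (Finset.univ.filter (fun z => j ≤ rnk P z)) := by
        refine Finset.disjoint_left.2 fun z hz hz' => ?_
        rw [Finset.mem_filter] at hz hz'
        omega
      rw [this, Finset.filter_or, Finset.card_union_of_disjoint hdis]
    -- k = F0 + G0
    have h4 : k = F0.card + G0.card := by
      have hsp : Finset.univ.filter (fun z => rnk P z = 0) =
          Finset.univ.filter
            (fun z => (rnk P z = 0 ∧ bkey P z < b) ∨ (rnk P z = 0 ∧ ¬ bkey P z < b)) := by
        apply Finset.filter_congr
        intro z _
        by_cases hc : bkey P z < b <;> simp [hc]
      have hdis : Disjoint F0 G0 := by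
        refine Finset.disjoint_left.2 fun z hz hz' => ?_
        rw [Finset.mem_filter] at hz hz'
        exact hz'.2.2 hz.2.2
      rw [← hA, hsp, Finset.filter_or, Finset.card_union_of_disjoint hdis]
    -- the injection: G0 ⊔ F2 ↪ Rj
    have h5 : G0.card + F2.card ≤ Rj.card := by
      have hdisj : Disjoint G0 F2 := by
        refine Finset.disjoint_left.2 fun z hz hz' => ?_
        rw [Finset.mem_filter] at hz hz'
        omega
      rw [← Finset.card_union_of_disjoint hdisj]
      apply Finset.card_le_card_of_injOn (fun z => if rnk P z = 0 then jelt P j z else z)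
      · intro z hz
        rcases Finset.mem_union.1 hz with hz | hz
        · rw [Finset.mem_filter] at hz
          obtain ⟨-, hz0, hzb⟩ := hz
          rw [not_lt] at hzb
          have hscls : j < scls P z := by
            have hy1 : j < scls P y := by rw [hj]; exact rnk_lt_scls P y
            have hy2 : scls P y ≤ scls P z := bkey_le_scls (by rw [← hb]; exact hzb)
            omega
          obtain ⟨-, hrnk⟩ := jelt_spec hscls
          simp only [hz0, if_true]
          rw [Finset.mem_coe, hRj, Finset.mem_filter]
          exact ⟨Finset.mem_univ _, by rw [hrnk]⟩
        · rw [Finset.mem_filter] at hz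
          obtain ⟨-, hzj, -⟩ := hz
          have hz0 : ¬ rnk P z = 0 := by omega
          simp only [hz0, if_false]
          rw [Finset.mem_coe, hRj, Finset.mem_filter]
          exact ⟨Finset.mem_univ _, by omega⟩
      · intro z hz z' hz' heq
        have hmem : ∀ w, w ∈ G0 ∪ F2 →
            (rnk P w = 0 ∧ ¬ bkey P w < b) ∨ (rnk P w = j ∧ bkey P w < b) := by
          intro w hw
          rcases Finset.mem_union.1 hw with hw | hw
          · rw [Finset.mem_filter] at hw; exact Or.inl hw.2
          · rw [Finset.mem_filter] at hw; exact Or.inr hw.2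
        rcases hmem z hz with ⟨hz0, hzb⟩ | ⟨hzj, hzb⟩ <;>
          rcases hmem z' hz' with ⟨hz0', hzb'⟩ | ⟨hzj', hzb'⟩
        · -- both in G0
          have hs : j < scls P z := by
            have hy1 : j < scls P y := by rw [hj]; exact rnk_lt_scls P y
            have hy2 : scls P y ≤ scls P z := bkey_le_scls (by rw [← hb]; omega)
            omega
          have hs' : j < scls P z' := by
            have hy1 : j < scls P y := by rw [hj]; exact rnk_lt_scls P y
            have hy2 : scls P y ≤ scls P z' := bkey_le_scls (by rw [← hb]; omega)
            omega
          obtain ⟨hrel, -⟩ := jelt_spec hs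
          obtain ⟨hrel', -⟩ := jelt_spec hs'
          simp only [hz0, hz0', if_true] at heq
          have hzz : P z z' := P.trans' (P.symm' hrel) (heq ▸ hrel')
          exact rel_rnk_eq hzz (by rw [hz0, hz0'])
        · -- z ∈ G0, z' ∈ F2 : contradiction via bkey
          exfalso
          have hs : j < scls P z := by
            have hy1 : j < scls P y := by rw [hj]; exact rnk_lt_scls P y
            have hy2 : scls P y ≤ scls P z := bkey_le_scls (by rw [← hb]; omega)
            omega
          obtain ⟨hrel, -⟩ := jelt_spec hs
          have hzj0 : ¬ rnk P z' = 0 := by omega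
          simp only [hz0, if_true, hzj0, if_false] at heq
          have : bkey P z = bkey P z' := by
            rw [← bkey_eq_of_rel hrel, heq]
          omega
        · -- symmetric mixed case
          exfalso
          have hs' : j < scls P z' := by
            have hy1 : j < scls P y := by rw [hj]; exact rnk_lt_scls P y
            have hy2 : scls P y ≤ scls P z' := bkey_le_scls (by rw [← hb]; omega)
            omega
          obtain ⟨hrel', -⟩ := jelt_spec hs'
          have hzj0 : ¬ rnk P z = 0 := by omega
          simp only [hzj0, if_false, hz0', if_true] at heq
          have : bkey P z = bkey P z' := by
            rw [heq, bkey_eq_of_rel hrel']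
          omega
        · -- both in F2
          have hzj0 : ¬ rnk P z = 0 := by omega
          have hzj0' : ¬ rnk P z' = 0 := by omega
          simpa [hzj0, hzj0'] using heq
    omega

/-! ### `Q1` itself -/

/-- number of chunks -/
noncomputable def rr (P : Setoid (Fin n)) : ℕ := n + 1 - (cls P).card

/-- the balanced complement -/
noncomputable def Q1 (P : Setoid (Fin n)) : Setoid (Fin n) :=
  Setoid.ker (fun x => pos P x % rr P)

lemma card_cls_le_n (P : Setoid (Fin n)) : (cls P).card ≤ n := by
  calc (cls P).card = ∑ _A ∈ cls P, 1 := by simp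
    _ ≤ ∑ A ∈ cls P, A.ncard := Finset.sum_le_sum fun A hA => ncard_pos hA
    _ = n := sum_ncard_cls P

lemma card_cls_pos (hn : 1 ≤ n) (P : Setoid (Fin n)) : 1 ≤ (cls P).card := by
  have x0 : Fin n := ⟨0, hn⟩
  exact Finset.card_pos.2 ⟨_, class_mem_cls P x0⟩

lemma rr_pos (P : Setoid (Fin n)) : 1 ≤ rr P := by
  have := card_cls_le_n P
  rw [rr]
  omega

lemma rr_le_n (hn : 1 ≤ n) (P : Setoid (Fin n)) : rr P ≤ n := by
  have := card_cls_pos hn P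
  rw [rr]
  omega

lemma pos_mcl_le (P : Setoid (Fin n)) (x : Fin n) : pos P (mcl P x) ≤ pos P x := by
  rcases Nat.eq_zero_or_pos (rnk P x) with h0 | hpos
  · have : x = mcl P x := rel_rnk_eq (P.symm' (mcl_rel P x)) (by rw [rnk_mcl, h0])
    rw [← this]
  · apply le_of_lt
    apply pos_mono
    rw [ekey_lt_iff]
    left
    rw [rnk_mcl]
    exact hpos

lemma Q1_meet (P : Setoid (Fin n)) : P ⊓ Q1 P = ⊥ := by
  have aux : ∀ x y : Fin n, P x y → pos P x < pos P y →
      pos P x % rr P = pos P y % rr P → False := by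
    intro x y hrel hlt hmod
    have hub : pos P y ≤ (n - (cls P).card) + pos P x := by
      have h1 := claimU P y
      have h2 : pos P (mcl P y) = pos P (mcl P x) := by rw [mcl_eq_of_rel hrel]
      have h3 := pos_mcl_le P x
      omega
    have hdvd : rr P ∣ pos P y - pos P x :=
      (Nat.modEq_iff_dvd' (le_of_lt hlt)).1 hmod
    have hle := Nat.le_of_dvd (by omega) hdvd
    have hk := card_cls_le_n P
    have hrr : rr P = n + 1 - (cls P).card := rfl
    omega
  apply le_antisymm _ bot_le
  rw [Setoid.le_def]
  intro x y h
  rcases Setoid.inf_iff_and.1 h with ⟨h1, h2⟩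
  have h2' : pos P x % rr P = pos P y % rr P := h2
  show (⊥ : Setoid (Fin n)) x y
  rw [Setoid.bot_def]
  rcases lt_trichotomy (pos P x) (pos P y) with hc | hc | hc
  · exact absurd (aux x y h1 hc h2') not_false
  · exact pos_inj hc
  · exact absurd (aux y x (P.symm' h1) hc h2'.symm) not_false

lemma pos_mcl_le_k (hn : 1 ≤ n) (P : Setoid (Fin n)) (w : Fin n) :
    pos P (mcl P w) ≤ (cls P).card - 1 := by
  classical
  rw [pos_mcl]
  have hsub : Finset.univ.filter (fun z => rnk P z = 0 ∧ bkey P z < bkey P w) ⊆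
      (Finset.univ.filter (fun z => rnk P z = 0)).erase (mcl P w) := by
    intro z hz
    rw [Finset.mem_filter] at hz
    refine Finset.mem_erase.2 ⟨?_, Finset.mem_filter.2 ⟨Finset.mem_univ z, hz.2.1⟩⟩
    intro heq
    have : bkey P (mcl P w) = bkey P w := bkey_eq_of_rel (mcl_rel P w)
    rw [heq, this] at hz
    exact absurd hz.2.2 (lt_irrefl _)
  have h1 := Finset.card_le_card hsub
  have hmem : mcl P w ∈ Finset.univ.filter (fun z => rnk P z = 0) :=
    Finset.mem_filter.2 ⟨Finset.mem_univ _, rnk_mcl P w⟩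
  have h2 : ((Finset.univ.filter (fun z => rnk P z = 0)).erase (mcl P w)).card =
      (Finset.univ.filter (fun z => rnk P z = 0)).card - 1 :=
    Finset.card_erase_of_mem hmem
  have h3 : (Finset.univ.filter (fun z => rnk P z = 0)).card = (cls P).card := by
    rw [← lam_zero P, lam]
  omega

lemma Q1_join (hn : 1 ≤ n) (P : Setoid (Fin n)) : P ⊔ Q1 P = ⊤ := by
  classical
  set S := P ⊔ Q1 P with hS
  have hP : ∀ {a b : Fin n}, P a b → S a b :=
    fun h => Setoid.le_def.1 (le_sup_left : P ≤ S) h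
  have hQ : ∀ {a b : Fin n}, pos P a % rr P = pos P b % rr P → S a b := by
    intro a b h
    exact Setoid.le_def.1 (le_sup_right : Q1 P ≤ S) h
  have hne : (Finset.univ : Finset (Fin n)).Nonempty := ⟨⟨0, hn⟩, Finset.mem_univ _⟩
  obtain ⟨xs, -, hxs⟩ := Finset.exists_max_image Finset.univ (fun z => pos P (mcl P z)) hne
  have main : ∀ t : ℕ, ∀ z : Fin n, pos P (mcl P xs) - pos P (mcl P z) ≤ t → S z xs := by
    intro t
    induction t with
    | zero =>
      intro z hz
      have hle := hxs z (Finset.mem_univ z)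
      have heq : pos P (mcl P z) = pos P (mcl P xs) := by omega
      have hm : mcl P z = mcl P xs := pos_inj heq
      have h1 : S z (mcl P z) := hP (P.symm' (mcl_rel P z))
      rw [hm] at h1
      exact S.trans' h1 (hP (mcl_rel P xs))
    | succ t ih =>
      intro z hz
      rcases Nat.eq_zero_or_pos (pos P (mcl P xs) - pos P (mcl P z)) with h0 | hpos
      · exact ih z (by omega)
      · set i := pos P (mcl P z) with hi
        have hik : pos P (mcl P xs) ≤ (cls P).card - 1 := pos_mcl_le_k hn P xs
        have hkn : (cls P).card ≤ n := card_cls_le_n P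
        have hk1 : 1 ≤ (cls P).card := card_cls_pos hn P
        have hilt : i + rr P < n := by
          have hrr : rr P = n + 1 - (cls P).card := rfl
          omega
        obtain ⟨y', hy'⟩ := pos_surj P hilt
        have link2 : S (mcl P z) y' := by
          apply hQ
          rw [hy', Nat.add_mod_right]
        have hcu := claimU P y'
        have hy'm : i + 1 ≤ pos P (mcl P y') := by
          rw [hy'] at hcu
          have hrr : rr P = n + 1 - (cls P).card := rfl
          have hkn' : (cls P).card ≤ n := card_cls_le_n P
          omega
        have hih : S y' xs := by
          apply ih
          omega
        have h1 : S z (mcl P z) := hP (P.symm' (mcl_rel P z))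
        exact S.trans' (S.trans' h1 link2) hih
  apply le_antisymm le_top
  rw [Setoid.le_def]
  intro x y _
  have hx : S x xs := main _ x le_rfl
  have hy : S y xs := main _ y le_rfl
  exact S.trans' hx (S.symm' hy)

/-! ### The profile of `Q1` -/

lemma cnt_mod_card (r m v : ℕ) (hr : 0 < r) (hv : v < r) :
    ((Finset.range (r * m)).filter (fun p => p % r = v)).card = m := by
  classical
  conv_rhs => rw [← Finset.card_range m]
  apply Finset.card_bij' (fun p _ => p / r) (fun t _ => v + t * r)
  · intro p hp
    rw [Finset.mem_filter, Finset.mem_range] at hp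
    rw [Finset.mem_range]
    rw [Nat.div_lt_iff_lt_mul hr]
    calc p < r * m := hp.1
      _ = m * r := Nat.mul_comm r m
  · intro t ht
    rw [Finset.mem_range] at ht
    rw [Finset.mem_filter, Finset.mem_range]
    constructor
    · calc v + t * r < r + t * r := by omega
        _ = (t + 1) * r := by ring
        _ ≤ m * r := Nat.mul_le_mul_right r ht
        _ = r * m := Nat.mul_comm m r
    · rw [Nat.add_mul_mod_self_right, Nat.mod_eq_of_lt hv]
  · intro p hp
    rw [Finset.mem_filter] at hp
    conv_rhs => rw [← Nat.div_add_mod p r]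
    rw [hp.2]
    ring
  · intro t ht
    rw [Nat.add_mul_div_right _ _ hr, Nat.div_eq_of_lt hv]
    omega

lemma cnt_mono (r v N N' : ℕ) (h : N ≤ N') :
    ((Finset.range N).filter (fun p => p % r = v)).card ≤
      ((Finset.range N').filter (fun p => p % r = v)).card :=
  Finset.card_le_card (Finset.filter_subset_filter _ (Finset.range_subset_range.2 h))

lemma prof_Q1 (hn : 1 ≤ n) (P : Setoid (Fin n)) (m : ℕ) :
    prof (Q1 P) m = min (rr P * m) n := by
  classical
  set r := rr P with hrdef
  have hr : 0 < r := rr_pos P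
  have hrn : r ≤ n := rr_le_n hn P
  rw [Q1, prof_ker]
  have himg : Finset.univ.image (fun x => pos P x % r) = Finset.range r := by
    apply Finset.eq_of_subset_of_card_le
    · intro v hv
      rcases Finset.mem_image.1 hv with ⟨x, _, rfl⟩
      exact Finset.mem_range.2 (Nat.mod_lt _ hr)
    · apply Finset.card_le_card
      intro v hv
      rw [Finset.mem_range] at hv
      obtain ⟨x, hx⟩ := pos_surj P (lt_of_lt_of_le hv hrn)
      refine Finset.mem_image.2 ⟨x, Finset.mem_univ x, ?_⟩
      rw [hx, Nat.mod_eq_of_lt hv]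
  rw [himg]
  have hfib : ∀ v : ℕ, (Finset.univ.filter (fun x => pos P x % r = v)).card =
      ((Finset.range n).filter (fun p => p % r = v)).card := by
    intro v
    apply Finset.card_bij (fun x _ => pos P x)
    · intro x hx
      rw [Finset.mem_filter] at hx
      rw [Finset.mem_filter, Finset.mem_range]
      exact ⟨pos_lt_n P x, hx.2⟩
    · intro x _ x' _ h
      exact pos_inj h
    · intro p hp
      rw [Finset.mem_filter, Finset.mem_range] at hp
      obtain ⟨x, hx⟩ := pos_surj P hp.1
      refine ⟨x, Finset.mem_filter.2 ⟨Finset.mem_univ x, ?_⟩, hx⟩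
      rw [hx]
      exact hp.2
  have hmin : ∀ v ∈ Finset.range r,
      min ((Finset.univ.filter (fun x => pos P x % r = v)).card) m =
      ((Finset.range (min n (r * m))).filter (fun p => p % r = v)).card := by
    intro v hv
    rw [Finset.mem_range] at hv
    rw [hfib v]
    rcases le_total n (r * m) with hc | hc
    · rw [min_eq_left hc]
      have hcm := cnt_mod_card r m v hr hv
      have hmono := cnt_mono r v n (r * m) hc
      omega
    · rw [min_eq_right hc]
      have hcm := cnt_mod_card r m v hr hv
      have hmono := cnt_mono r v (r * m) n hc
      omega
  rw [Finset.sum_congr rfl hmin]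
  have := Finset.card_eq_sum_card_fiberwise
    (s := Finset.range (min n (r * m))) (t := Finset.range r) (f := fun p => p % r)
    (fun p _ => Finset.mem_range.2 (Nat.mod_lt _ hr))
  rw [Finset.card_range] at this
  rw [← this]
  exact Nat.min_comm _ _

/-- `Q1 P` has the pointwise largest profile among complements of `P`. -/
lemma prof_le_Q1 (hn : 1 ≤ n) (P Q' : Setoid (Fin n)) (hj : P ⊔ Q' = ⊤) (m : ℕ) :
    prof Q' m ≤ prof (Q1 P) m := by
  rw [prof_Q1 hn P m]
  exact prof_le_min hn P Q' hj m

/-! ### Final assembly -/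

lemma partSize_cast (S : Setoid (Fin n)) :
    (partSize n S : ℝ) = ∑ A ∈ cls S, ((A.ncard.choose 2 : ℕ) : ℝ) := by
  rw [partSize_eq_sum, Nat.cast_sum]

section Final

variable {P : Setoid (Fin n)}

/-- generic max-side equivalence -/
lemma max_equiv_g (g : ℕ → ℝ) (h0 : g 0 = 0)
    (hconv : ∀ j : ℕ, j + 2 ≤ n → g (j + 1) - g j < g (j + 2) - g (j + 1))
    {Q : Setoid (Fin n)} (hmQ : P ⊓ Q = ⊥) (hjQ : P ⊔ Q = ⊤) :
    (∀ Q' : Setoid (Fin n), P ⊓ Q' = ⊥ → P ⊔ Q' = ⊤ →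
        (∑ A ∈ cls Q', g A.ncard) ≤ ∑ A ∈ cls Q, g A.ncard) ↔
      (∀ m, prof (Q0 P) m = prof Q m) := by
  have hQ0c : P ⊓ Q0 P = ⊥ := Q0_meet P
  have hQ0j : P ⊔ Q0 P = ⊤ := Q0_join P
  have h2 := core_compare (Q0 P) Q g h0 hconv (fun m => prof_Q0_le P Q hmQ m)
  constructor
  · intro hmax
    exact h2.2.1 (le_antisymm h2.1 (hmax (Q0 P) hQ0c hQ0j))
  · intro hprof Q' hm' hj'
    have h1 := core_compare (Q0 P) Q' g h0 hconv (fun m => prof_Q0_le P Q' hm' m)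
    calc (∑ A ∈ cls Q', g A.ncard) ≤ ∑ A ∈ cls (Q0 P), g A.ncard := h1.1
      _ = ∑ A ∈ cls Q, g A.ncard := (h2.2.2 hprof).symm

/-- generic min-side equivalence -/
lemma min_equiv_g (hn : 1 ≤ n) (g : ℕ → ℝ) (h0 : g 0 = 0)
    (hconv : ∀ j : ℕ, j + 2 ≤ n → g (j + 1) - g j < g (j + 2) - g (j + 1))
    {Q : Setoid (Fin n)} (hmQ : P ⊓ Q = ⊥) (hjQ : P ⊔ Q = ⊤) :
    (∀ Q' : Setoid (Fin n), P ⊓ Q' = ⊥ → P ⊔ Q' = ⊤ →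
        (∑ A ∈ cls Q, g A.ncard) ≤ ∑ A ∈ cls Q', g A.ncard) ↔
      (∀ m, prof Q m = prof (Q1 P) m) := by
  have hQ1c : P ⊓ Q1 P = ⊥ := Q1_meet P
  have hQ1j : P ⊔ Q1 P = ⊤ := Q1_join hn P
  have h2 := core_compare Q (Q1 P) g h0 hconv (fun m => prof_le_Q1 hn P Q hjQ m)
  constructor
  · intro hmin
    exact h2.2.1 (le_antisymm h2.1 (hmin (Q1 P) hQ1c hQ1j))
  · intro hprof Q' hm' hj'
    have h1 := core_compare Q' (Q1 P) g h0 hconv (fun m => prof_le_Q1 hn P Q' hj' m)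
    calc (∑ A ∈ cls Q, g A.ncard) = ∑ A ∈ cls (Q1 P), g A.ncard := (h2.2.2 hprof).symm
      _ ≤ ∑ A ∈ cls Q', g A.ncard := h1.1

lemma HD_le_iff {A B : Setoid (Fin n)} (hA : P ⊓ A = ⊥) (hB : P ⊓ B = ⊥) :
    HD n P A ≤ HD n P B ↔ partSize n A ≤ partSize n B := by
  rw [HD_compl P A hA, HD_compl P B hB]
  omega

lemma VI_le_iff (hn : 1 ≤ n) {A B : Setoid (Fin n)} (hA : P ⊓ A = ⊥) (hB : P ⊓ B = ⊥) :
    VI n P A ≤ VI n P B ↔ esum A ≤ esum B := by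
  rw [VI_compl hn P A hA, VI_compl hn P B hB, entropy_eq hn A, entropy_eq hn B]
  have hn0 : (0 : ℝ) < n := by positivity
  constructor
  · intro h
    have h2 : esum A / n ≤ esum B / n := by linarith
    exact (div_le_div_iff_of_pos_right hn0).1 h2
  · intro h
    have h2 : esum A / n ≤ esum B / n := (div_le_div_iff_of_pos_right hn0).2 h
    linarith

lemma partSize_le_iff {A B : Setoid (Fin n)} :
    partSize n A ≤ partSize n B ↔
      (∑ X ∈ cls A, ((X.ncard.choose 2 : ℕ) : ℝ)) ≤
        ∑ X ∈ cls B, ((X.ncard.choose 2 : ℕ) : ℝ) := by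
  rw [← Nat.cast_le (α := ℝ), partSize_cast, partSize_cast]

end Final

end HDVIProof

open HDVIProof

/-- Among the complements of `P`, the Hamming distance `HD(P,·)` and the
variation of information `VI(P,·)` have the same minimizers and maximizers. -/
theorem HD_VI_same_extremizers_over_complements (n : ℕ) (hn : 1 ≤ n)
    (P Q : Setoid (Fin n)) (hmeet : P ⊓ Q = ⊥) (hjoin : P ⊔ Q = ⊤) :
    ((∀ Q' : Setoid (Fin n), P ⊓ Q' = ⊥ → P ⊔ Q' = ⊤ → HD n P Q ≤ HD n P Q') ↔
      (∀ Q' : Setoid (Fin n), P ⊓ Q' = ⊥ → P ⊔ Q' = ⊤ → VI n P Q ≤ VI n P Q')) ∧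
    ((∀ Q' : Setoid (Fin n), P ⊓ Q' = ⊥ → P ⊔ Q' = ⊤ → HD n P Q' ≤ HD n P Q) ↔
      (∀ Q' : Setoid (Fin n), P ⊓ Q' = ⊥ → P ⊔ Q' = ⊤ → VI n P Q' ≤ VI n P Q)) := by
  classical
  have hg0s : ((fun j : ℕ => ((j.choose 2 : ℕ) : ℝ)) 0) = 0 := by norm_num
  have hg0e : ((fun j : ℕ => (j : ℝ) * Real.logb 2 (j : ℝ)) 0) = 0 := by norm_num
  constructor
  · -- minimizers
    have hs := min_equiv_g (P := P) hn (fun j => ((j.choose 2 : ℕ) : ℝ)) hg0s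
      (choose_conv) hmeet hjoin
    have he := min_equiv_g (P := P) hn (fun j => (j : ℝ) * Real.logb 2 (j : ℝ)) hg0e
      (mullog_conv) hmeet hjoin
    have hHD' : (∀ Q' : Setoid (Fin n), P ⊓ Q' = ⊥ → P ⊔ Q' = ⊤ → HD n P Q ≤ HD n P Q') ↔
        (∀ m, prof Q m = prof (Q1 P) m) := by
      rw [← hs]
      constructor
      · intro h Q' hm' hj'
        have h1 := h Q' hm' hj'
        rw [HD_le_iff hmeet hm', partSize_le_iff] at h1
        exact h1
      · intro h Q' hm' hj'
        rw [HD_le_iff hmeet hm', partSize_le_iff]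
        exact h Q' hm' hj'
    have hVI' : (∀ Q' : Setoid (Fin n), P ⊓ Q' = ⊥ → P ⊔ Q' = ⊤ → VI n P Q ≤ VI n P Q') ↔
        (∀ m, prof Q m = prof (Q1 P) m) := by
      rw [← he]
      constructor
      · intro h Q' hm' hj'
        have h1 := h Q' hm' hj'
        rw [VI_le_iff hn hmeet hm'] at h1
        exact h1
      · intro h Q' hm' hj'
        rw [VI_le_iff hn hmeet hm']
        exact h Q' hm' hj'
    rw [hHD', hVI']
  · -- maximizers
    have hs := max_equiv_g (P := P) (fun j => ((j.choose 2 : ℕ) : ℝ)) hg0s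
      (choose_conv) hmeet hjoin
    have he := max_equiv_g (P := P) (fun j => (j : ℝ) * Real.logb 2 (j : ℝ)) hg0e
      (mullog_conv) hmeet hjoin
    have hHD' : (∀ Q' : Setoid (Fin n), P ⊓ Q' = ⊥ → P ⊔ Q' = ⊤ → HD n P Q' ≤ HD n P Q) ↔
        (∀ m, prof (Q0 P) m = prof Q m) := by
      rw [← hs]
      constructor
      · intro h Q' hm' hj'
        have h1 := h Q' hm' hj'
        rw [HD_le_iff hm' hmeet, partSize_le_iff] at h1
        exact h1
      · intro h Q' hm' hj'
        rw [HD_le_iff hm' hmeet, partSize_le_iff]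
        exact h Q' hm' hj'
    have hVI' : (∀ Q' : Setoid (Fin n), P ⊓ Q' = ⊥ → P ⊔ Q' = ⊤ → VI n P Q' ≤ VI n P Q) ↔
        (∀ m, prof (Q0 P) m = prof Q m) := by
      rw [← he]
      constructor
      · intro h Q' hm' hj'
        have h1 := h Q' hm' hj'
        rw [VI_le_iff hn hm' hmeet] at h1
        exact h1
      · intro h Q' hm' hj'
        rw [VI_le_iff hn hm' hmeet]
        exact h Q' hm' hj'
    rw [hHD', hVI']
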